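/- Suppose M coupons are drawn independently and uniformly at random from n distinct types, and let S_{k,M} be the number of types appearing exactly k times among the M coupons. Then for any integer 0 ≤ 2k ≤ M with k < n, Var(S_{k,M}) ≤ E(S_{k,M})^2 · ((1 − 1/n)^{−2k} − 1) + E(S_{k,M}). -/

import Mathlib

open MeasureTheory ProbabilityTheory Filter Real Topology
open scoped ENNReal

noncomputable section

/-- The number of coupon types that appear exactly `k` times among the first `x` draws. -/
def couponCount {Ω : Type*} {n : ℕ} (X : ℕ → Ω → Fin n) (k x : ℕ) (ω : Ω) : ℕ :=
  (Finset.univ.filter fun c : Fin n =>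
    ((Finset.range x).filter fun i => X i ω = c).card = k).card

/-- The number of coupons drawn until every type has appeared at least `m` times. -/
def collectTime {Ω : Type*} {n : ℕ} (X : ℕ → Ω → Fin n) (m : ℕ) (ω : Ω) : ℕ :=
  sInf {t | ∀ c : Fin n, m ≤ ((Finset.range t).filter fun i => X i ω = c).card}

/-- The draws `X i` are independent and each uniformly distributed on the `n` types. -/
def IIDUniform {Ω : Type*} [MeasurableSpace Ω] {n : ℕ} (X : ℕ → Ω → Fin n)
    (μ : Measure Ω) : Prop :=
  (∀ i, Measurable (X i)) ∧ iIndepFun X μ ∧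
    ∀ i (c : Fin n), μ {ω | X i ω = c} = 1 / n

/-- The Gumbel distribution `Gumbel(a, 1)`, i.e. the Borel measure on `ℝ` whose cumulative
distribution function is `x ↦ exp (-exp (-(x - a)))`. -/
def gumbelCDF (a : ℝ) : StieltjesFunction ℝ where
  toFun := fun x => Real.exp (-Real.exp (-(x - a)))
  mono' := fun x y h => by
    have h1 : Real.exp (-(y - a)) ≤ Real.exp (-(x - a)) := Real.exp_le_exp.2 (by linarith)
    exact Real.exp_le_exp.2 (by linarith)
  right_continuous' := fun x => Continuous.continuousWithinAt (by continuity)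

def gumbelMeasure (a : ℝ) : Measure ℝ := (gumbelCDF a).measure


lemma aux_filter_eq {Ω : Type} {n : ℕ} (X : ℕ → Ω → Fin n) (M : ℕ)
    (c : Fin n) (s : Finset ℕ) (hs : s ⊆ Finset.range M) :
    {ω | ((Finset.range M).filter fun i => X i ω = c) = s} =
      ⋂ i ∈ Finset.range M, X i ⁻¹' (if i ∈ s then {c} else {c}ᶜ) := by
  ext ω
  simp only [Set.mem_setOf_eq, Set.mem_iInter, Set.mem_preimage, Finset.mem_range]
  constructor
  · intro h i hi
    by_cases his : i ∈ s
    · simp only [his, if_true, Set.mem_singleton_iff]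
      have := h ▸ his
      simpa using (Finset.mem_filter.1 this).2
    · simp only [his, if_false, Set.mem_compl_iff, Set.mem_singleton_iff]
      intro hc
      exact his (h ▸ Finset.mem_filter.2 ⟨Finset.mem_range.2 hi, hc⟩)
  · intro h
    ext i
    simp only [Finset.mem_filter, Finset.mem_range]
    constructor
    · rintro ⟨hi, hc⟩
      by_contra his
      have := h i hi
      simp [his] at this
      exact this hc
    · intro his
      have hi : i < M := Finset.mem_range.1 (hs his)
      have := h i hi
      simp [his] at this
      exact ⟨hi, this⟩

lemma aux_meas_set {Ω : Type} [MeasurableSpace Ω] {n : ℕ} (X : ℕ → Ω → Fin n)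
    (hm : ∀ i, Measurable (X i)) (M : ℕ) (c : Fin n) (s : Finset ℕ)
    (hs : s ⊆ Finset.range M) :
    MeasurableSet {ω | ((Finset.range M).filter fun i => X i ω = c) = s} := by
  rw [aux_filter_eq X M c s hs]
  exact MeasurableSet.biInter (Finset.range M).countable_toSet
    (fun i _ => (hm i) (MeasurableSet.of_discrete))

lemma aux_meas_single {Ω : Type} [MeasurableSpace Ω] {n : ℕ}
    (μ : Measure Ω) [IsProbabilityMeasure μ] (X : ℕ → Ω → Fin n)
    (hX : IIDUniform X μ) (M k : ℕ) (c : Fin n) (s : Finset ℕ)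
    (hs : s ∈ Finset.powersetCard k (Finset.range M)) :
    μ {ω | ((Finset.range M).filter fun i => X i ω = c) = s} =
      ((n : ℝ≥0∞))⁻¹ ^ k * (1 - (n : ℝ≥0∞)⁻¹) ^ (M - k) := by
  obtain ⟨hsub, hcard⟩ := Finset.mem_powersetCard.1 hs
  rw [aux_filter_eq X M c s hsub]
  rw [hX.2.1.measure_inter_preimage_eq_mul (Finset.range M)
    (sets := fun i => if i ∈ s then {c} else {c}ᶜ)
    (fun i _ => MeasurableSet.of_discrete)]
  have h1 : ∀ i, μ (X i ⁻¹' {c}) = (n : ℝ≥0∞)⁻¹ := by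
    intro i
    have : X i ⁻¹' {c} = {ω | X i ω = c} := by ext ω; simp [Set.mem_preimage]
    rw [this, hX.2.2 i c, one_div]
  have h2 : ∀ i, μ (X i ⁻¹' {c}ᶜ) = 1 - (n : ℝ≥0∞)⁻¹ := by
    intro i
    rw [Set.preimage_compl, prob_compl_eq_one_sub ((hX.1 i) MeasurableSet.of_discrete), h1]
  have : ∀ i ∈ Finset.range M, μ (X i ⁻¹' (if i ∈ s then {c} else {c}ᶜ)) =
      if i ∈ s then (n : ℝ≥0∞)⁻¹ else 1 - (n : ℝ≥0∞)⁻¹ := by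
    intro i _
    by_cases his : i ∈ s
    · simp only [his, if_true]; exact h1 i
    · simp only [his, if_false]; exact h2 i
  rw [Finset.prod_congr rfl this, Finset.prod_ite, Finset.prod_const, Finset.prod_const]
  have hf1 : (Finset.range M).filter (fun i => i ∈ s) = s := by
    ext i
    simp only [Finset.mem_filter, Finset.mem_range, and_iff_right_iff_imp]
    exact fun hi => Finset.mem_range.1 (hsub hi)
  have hf2 : (Finset.range M).filter (fun i => i ∉ s) = Finset.range M \ s := by
    rw [Finset.sdiff_eq_filter]
  rw [hf1, hf2, Finset.card_sdiff_of_subset hsub, Finset.card_range, hcard]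

lemma aux_A_decomp {Ω : Type} {n : ℕ} (X : ℕ → Ω → Fin n) (M k : ℕ) (c : Fin n) :
    {ω | (((Finset.range M).filter fun i => X i ω = c)).card = k} =
      ⋃ s ∈ Finset.powersetCard k (Finset.range M),
        {ω | ((Finset.range M).filter fun i => X i ω = c) = s} := by
  ext ω
  simp only [Set.mem_setOf_eq, Set.mem_iUnion, Finset.mem_powersetCard, exists_prop]
  constructor
  · intro h
    exact ⟨_, ⟨Finset.filter_subset _ _, h⟩, rfl⟩
  · rintro ⟨s, ⟨-, hcard⟩, h⟩
    rw [h]; exact hcard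

lemma aux_A_val {Ω : Type} [MeasurableSpace Ω] {n : ℕ}
    (μ : Measure Ω) [IsProbabilityMeasure μ] (X : ℕ → Ω → Fin n)
    (hX : IIDUniform X μ) (M k : ℕ) (c : Fin n) :
    μ {ω | (((Finset.range M).filter fun i => X i ω = c)).card = k} =
      (M.choose k : ℝ≥0∞) * ((n : ℝ≥0∞)⁻¹ ^ k * (1 - (n : ℝ≥0∞)⁻¹) ^ (M - k)) := by
  rw [aux_A_decomp X M k c]
  rw [measure_biUnion_finset]
  · rw [Finset.sum_congr rfl (fun s hs => aux_meas_single μ X hX M k c s hs),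
      Finset.sum_const, Finset.card_powersetCard, Finset.card_range, nsmul_eq_mul]
  · intro s hs t ht hst
    simp only [Function.onFun]
    rw [Set.disjoint_left]
    intro ω h1 h2
    exact hst (h1.symm.trans h2)
  · intro s hs
    exact aux_meas_set X hX.1 M c s (Finset.mem_powersetCard.1 hs).1

lemma aux_pair_eq {Ω : Type} [MeasurableSpace Ω] {n : ℕ}
    (μ : Measure Ω) [IsProbabilityMeasure μ] (X : ℕ → Ω → Fin n)
    (hX : IIDUniform X μ) (M k : ℕ) (c c' : Fin n) (hcc : c ≠ c') (s t : Finset ℕ)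
    (hs : s ∈ Finset.powersetCard k (Finset.range M))
    (ht : t ∈ Finset.powersetCard k (Finset.range M)) (hst : Disjoint s t) :
    μ ({ω | ((Finset.range M).filter fun i => X i ω = c) = s} ∩
        {ω | ((Finset.range M).filter fun i => X i ω = c') = t}) =
      (n : ℝ≥0∞)⁻¹ ^ (2 * k) * (1 - 2 * (n : ℝ≥0∞)⁻¹) ^ (M - 2 * k) := by
  obtain ⟨hsub, hcard⟩ := Finset.mem_powersetCard.1 hs
  obtain ⟨tsub, tcard⟩ := Finset.mem_powersetCard.1 ht
  have hdecomp : {ω | ((Finset.range M).filter fun i => X i ω = c) = s} ∩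
        {ω | ((Finset.range M).filter fun i => X i ω = c') = t} =
      ⋂ i ∈ Finset.range M, X i ⁻¹'
        ((if i ∈ s then {c} else {c}ᶜ) ∩ (if i ∈ t then {c'} else {c'}ᶜ)) := by
    rw [aux_filter_eq X M c s hsub, aux_filter_eq X M c' t tsub]
    ext ω
    simp only [Set.mem_inter_iff, Set.mem_iInter, Set.mem_preimage]
    constructor
    · rintro ⟨h1, h2⟩ i hi
      exact ⟨h1 i hi, h2 i hi⟩
    · intro h
      exact ⟨fun i hi => (h i hi).1, fun i hi => (h i hi).2⟩
  rw [hdecomp]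
  rw [hX.2.1.measure_inter_preimage_eq_mul (Finset.range M)
    (sets := fun i => (if i ∈ s then {c} else {c}ᶜ) ∩ (if i ∈ t then {c'} else {c'}ᶜ))
    (fun i _ => MeasurableSet.of_discrete)]
  have h1 : ∀ (i : ℕ) (d : Fin n), μ (X i ⁻¹' {d}) = (n : ℝ≥0∞)⁻¹ := by
    intro i d
    have : X i ⁻¹' {d} = {ω | X i ω = d} := by ext ω; simp [Set.mem_preimage]
    rw [this, hX.2.2 i d, one_div]
  have h2 : ∀ i : ℕ, μ (X i ⁻¹' ({c}ᶜ ∩ {c'}ᶜ)) = 1 - 2 * (n : ℝ≥0∞)⁻¹ := by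
    intro i
    have hcompl : ({c}ᶜ ∩ {c'}ᶜ : Set (Fin n)) = ({c} ∪ {c'})ᶜ := by
      rw [Set.compl_union]
    rw [hcompl, Set.preimage_compl,
      prob_compl_eq_one_sub ((hX.1 i) MeasurableSet.of_discrete),
      Set.preimage_union,
      measure_union (by
        rw [Set.disjoint_left]
        intro ω hω hω'
        simp only [Set.mem_preimage, Set.mem_singleton_iff] at hω hω'
        exact hcc (hω.symm.trans hω'))
        ((hX.1 i) MeasurableSet.of_discrete),
      h1, h1, two_mul]
  have hterm : ∀ i ∈ Finset.range M,
      μ (X i ⁻¹' ((if i ∈ s then {c} else {c}ᶜ) ∩ (if i ∈ t then {c'} else {c'}ᶜ))) =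
      if i ∈ s ∪ t then (n : ℝ≥0∞)⁻¹ else 1 - 2 * (n : ℝ≥0∞)⁻¹ := by
    intro i _
    by_cases his : i ∈ s
    · have hit : i ∉ t := Finset.disjoint_left.1 hst his
      have : ({c} : Set (Fin n)) ∩ {c'}ᶜ = {c} := by
        apply Set.inter_eq_left.2
        intro x hx
        simp only [Set.mem_singleton_iff] at hx
        simp [hx, hcc]
      simp only [his, hit, if_true, if_false, Finset.mem_union, true_or, this]
      exact h1 i c
    · by_cases hit : i ∈ t
      · have : ({c}ᶜ : Set (Fin n)) ∩ {c'} = {c'} := by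
          apply Set.inter_eq_right.2
          intro x hx
          simp only [Set.mem_singleton_iff] at hx
          simp [hx, Ne.symm hcc]
        simp only [his, hit, if_true, if_false, Finset.mem_union, or_true, this]
        exact h1 i c'
      · simp only [his, hit, if_false, Finset.mem_union, or_self]
        exact h2 i
  rw [Finset.prod_congr rfl hterm, Finset.prod_ite, Finset.prod_const, Finset.prod_const]
  have hsub2 : s ∪ t ⊆ Finset.range M := Finset.union_subset hsub tsub
  have hf1 : (Finset.range M).filter (fun i => i ∈ s ∪ t) = s ∪ t := by
    ext i
    simp only [Finset.mem_filter, Finset.mem_range, and_iff_right_iff_imp]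
    exact fun hi => Finset.mem_range.1 (hsub2 hi)
  have hf2 : (Finset.range M).filter (fun i => i ∉ s ∪ t) = Finset.range M \ (s ∪ t) := by
    rw [Finset.sdiff_eq_filter]
  have hcu : (s ∪ t).card = 2 * k := by
    rw [Finset.card_union_of_disjoint hst, hcard, tcard]; ring
  rw [hf1, hf2, Finset.card_sdiff_of_subset hsub2, Finset.card_range, hcu]

lemma aux_pair_bound {Ω : Type} [MeasurableSpace Ω] {n : ℕ}
    (μ : Measure Ω) [IsProbabilityMeasure μ] (X : ℕ → Ω → Fin n)
    (hX : IIDUniform X μ) (M k : ℕ) (c c' : Fin n) (hcc : c ≠ c') (s t : Finset ℕ)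
    (hs : s ∈ Finset.powersetCard k (Finset.range M))
    (ht : t ∈ Finset.powersetCard k (Finset.range M)) :
    μ ({ω | ((Finset.range M).filter fun i => X i ω = c) = s} ∩
        {ω | ((Finset.range M).filter fun i => X i ω = c') = t}) ≤
      (n : ℝ≥0∞)⁻¹ ^ (2 * k) * (1 - 2 * (n : ℝ≥0∞)⁻¹) ^ (M - 2 * k) := by
  by_cases hst : Disjoint s t
  · exact le_of_eq (aux_pair_eq μ X hX M k c c' hcc s t hs ht hst)
  · obtain ⟨i, his, hit⟩ := Finset.not_disjoint_iff.1 hst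
    have : ({ω | ((Finset.range M).filter fun i => X i ω = c) = s} ∩
        {ω | ((Finset.range M).filter fun i => X i ω = c') = t}) = ∅ := by
      ext ω
      simp only [Set.mem_inter_iff, Set.mem_setOf_eq, Set.mem_empty_iff_false, iff_false,
        not_and]
      intro h1 h2
      have hc : X i ω = c := by
        have := h1 ▸ his
        exact (Finset.mem_filter.1 this).2
      have hc' : X i ω = c' := by
        have := h2 ▸ hit
        exact (Finset.mem_filter.1 this).2
      exact hcc (hc.symm.trans hc')
    rw [this, measure_empty]
    exact zero_le

lemma aux_AA_bound {Ω : Type} [MeasurableSpace Ω] {n : ℕ}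
    (μ : Measure Ω) [IsProbabilityMeasure μ] (X : ℕ → Ω → Fin n)
    (hX : IIDUniform X μ) (M k : ℕ) (c c' : Fin n) (hcc : c ≠ c') :
    μ ({ω | (((Finset.range M).filter fun i => X i ω = c)).card = k} ∩
        {ω | (((Finset.range M).filter fun i => X i ω = c')).card = k}) ≤
      ((M.choose k : ℝ≥0∞)) ^ 2 *
        ((n : ℝ≥0∞)⁻¹ ^ (2 * k) * (1 - 2 * (n : ℝ≥0∞)⁻¹) ^ (M - 2 * k)) := by
  set Q := Finset.powersetCard k (Finset.range M) with hQ
  have hcover : ({ω | (((Finset.range M).filter fun i => X i ω = c)).card = k} ∩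
        {ω | (((Finset.range M).filter fun i => X i ω = c')).card = k}) ⊆
      ⋃ s ∈ Q, ⋃ t ∈ Q, ({ω | ((Finset.range M).filter fun i => X i ω = c) = s} ∩
        {ω | ((Finset.range M).filter fun i => X i ω = c') = t}) := by
    rintro ω ⟨h1, h2⟩
    simp only [Set.mem_iUnion, exists_prop]
    exact ⟨_, Finset.mem_powersetCard.2 ⟨Finset.filter_subset _ _, h1⟩,
      _, Finset.mem_powersetCard.2 ⟨Finset.filter_subset _ _, h2⟩, rfl, rfl⟩
  calc μ _ ≤ μ (⋃ s ∈ Q, ⋃ t ∈ Q, ({ω | ((Finset.range M).filter fun i => X i ω = c) = s} ∩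
        {ω | ((Finset.range M).filter fun i => X i ω = c') = t})) := measure_mono hcover
    _ ≤ ∑ s ∈ Q, μ (⋃ t ∈ Q, ({ω | ((Finset.range M).filter fun i => X i ω = c) = s} ∩
        {ω | ((Finset.range M).filter fun i => X i ω = c') = t})) :=
      measure_biUnion_finset_le Q _
    _ ≤ ∑ s ∈ Q, ∑ t ∈ Q, μ ({ω | ((Finset.range M).filter fun i => X i ω = c) = s} ∩
        {ω | ((Finset.range M).filter fun i => X i ω = c') = t}) :=
      Finset.sum_le_sum (fun s _ => measure_biUnion_finset_le Q _)
    _ ≤ ∑ s ∈ Q, ∑ t ∈ Q,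
        ((n : ℝ≥0∞)⁻¹ ^ (2 * k) * (1 - 2 * (n : ℝ≥0∞)⁻¹) ^ (M - 2 * k)) :=
      Finset.sum_le_sum (fun s hs => Finset.sum_le_sum (fun t ht =>
        aux_pair_bound μ X hX M k c c' hcc s t hs ht))
    _ = ((M.choose k : ℝ≥0∞)) ^ 2 *
        ((n : ℝ≥0∞)⁻¹ ^ (2 * k) * (1 - 2 * (n : ℝ≥0∞)⁻¹) ^ (M - 2 * k)) := by
      rw [Finset.sum_const, Finset.sum_const, hQ, Finset.card_powersetCard,
        Finset.card_range, nsmul_eq_mul, nsmul_eq_mul, ← mul_assoc]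
      push_cast
      ring


/-- If `M` coupons are drawn i.i.d. uniformly from `n` types and `S_{k,M}`
is the number of types appearing exactly `k` times, then for `0 ≤ 2k ≤ M` with `k < n`,
`Var(S_{k,M}) ≤ E(S_{k,M})² ((1 - 1/n)^(-2k) - 1) + E(S_{k,M})`. -/
theorem statement17
    (n : ℕ) (hn : 0 < n) (M k : ℕ) (hk : 2 * k ≤ M) (hkn : k < n)
    (Ω : Type) [MeasurableSpace Ω]
    (μ : Measure Ω) (hprob : IsProbabilityMeasure μ)
    (X : ℕ → Ω → Fin n) (hX : IIDUniform X μ) :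
    variance (fun ω => (couponCount X k M ω : ℝ)) μ
      ≤ (∫ ω, (couponCount X k M ω : ℝ) ∂μ) ^ 2
          * ((1 - 1 / (n : ℝ)) ^ (-(2 * (k : ℤ))) - 1)
        + ∫ ω, (couponCount X k M ω : ℝ) ∂μ := by
  classical
  set A : Fin n → Set Ω :=
    fun c => {ω | (((Finset.range M).filter fun i => X i ω = c)).card = k} with hA
  have hAmeas : ∀ c, MeasurableSet (A c) := by
    intro c
    rw [hA]
    simp only
    rw [aux_A_decomp X M k c]
    exact Finset.measurableSet_biUnion _
      (fun s hs => aux_meas_set X hX.1 M c s (Finset.mem_powersetCard.1 hs).1)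
  have hrep : ∀ ω, (couponCount X k M ω : ℝ) = ∑ c, (A c).indicator (fun _ => (1:ℝ)) ω := by
    intro ω
    rw [couponCount, Finset.card_filter]
    push_cast
    refine Finset.sum_congr rfl (fun c _ => ?_)
    by_cases h : ((Finset.range M).filter fun i => X i ω = c).card = k
    · simp [Set.indicator_apply, hA, h]
    · simp [Set.indicator_apply, hA, h]
  have hm1 : ∫ ω, (couponCount X k M ω : ℝ) ∂μ = ∑ c : Fin n, (μ (A c)).toReal := by
    simp_rw [hrep]
    rw [integral_finset_sum _ (fun c _ => (integrable_const (1:ℝ)).indicator (hAmeas c))]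
    refine Finset.sum_congr rfl fun c _ => ?_
    rw [integral_indicator_const (1:ℝ) (hAmeas c), smul_eq_mul, mul_one, measureReal_def]
  have hsq : ∀ ω, ((couponCount X k M ω : ℝ))^2 = ∑ c : Fin n, ∑ c' : Fin n,
      ((A c ∩ A c').indicator (fun _ => (1:ℝ)) ω) := by
    intro ω
    rw [hrep, sq, Finset.sum_mul_sum]
    refine Finset.sum_congr rfl fun c _ => Finset.sum_congr rfl fun c' _ => ?_
    by_cases h1 : ω ∈ A c <;> by_cases h2 : ω ∈ A c' <;>
      simp [Set.indicator_apply, h1, h2]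
  have hm2 : ∫ ω, ((couponCount X k M ω : ℝ))^2 ∂μ =
      ∑ c : Fin n, ∑ c' : Fin n, (μ (A c ∩ A c')).toReal := by
    simp_rw [hsq]
    rw [integral_finset_sum _ (fun c _ => integrable_finset_sum _ (fun c' _ =>
      (integrable_const (1:ℝ)).indicator ((hAmeas c).inter (hAmeas c'))))]
    refine Finset.sum_congr rfl fun c _ => ?_
    rw [integral_finset_sum _ (fun c' _ =>
      (integrable_const (1:ℝ)).indicator ((hAmeas c).inter (hAmeas c')))]
    refine Finset.sum_congr rfl fun c' _ => ?_
    rw [integral_indicator_const (1:ℝ) ((hAmeas c).inter (hAmeas c')), smul_eq_mul, mul_one, measureReal_def]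
  have hmem : MemLp (fun ω => (couponCount X k M ω : ℝ)) 2 μ := by
    have heq : (fun ω => (couponCount X k M ω : ℝ)) =
        fun ω => ∑ c : Fin n, (A c).indicator (fun _ => (1:ℝ)) ω := funext hrep
    rw [heq]
    exact memLp_finset_sum _ (fun c _ => memLp_indicator_const 2 (hAmeas c) 1
      (Or.inr (measure_ne_top μ _)))
  -- real-valued quantities
  set r : ℝ := 1 - (n:ℝ)⁻¹ with hrdef
  set C : ℝ := (M.choose k : ℝ) with hC
  have hn1 : (1:ℝ) ≤ n := by exact_mod_cast hn
  have hrnonneg : 0 ≤ r := by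
    rw [hrdef]
    have : (n:ℝ)⁻¹ ≤ 1 := by
      rw [inv_le_one_iff₀]; right; exact hn1
    linarith
  have htR : (1 - (n : ℝ≥0∞)⁻¹).toReal = r := by
    rw [ENNReal.toReal_sub_of_le (ENNReal.inv_le_one.2 (by exact_mod_cast hn))
      ENNReal.one_ne_top]
    simp [hrdef]
  have hp : ∀ c : Fin n, (μ (A c)).toReal = C * ((n:ℝ)⁻¹^k * r^(M-k)) := by
    intro c
    rw [hA]
    simp only
    rw [aux_A_val μ X hX M k c, ENNReal.toReal_mul, ENNReal.toReal_mul,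
      ENNReal.toReal_pow, ENNReal.toReal_pow, ENNReal.toReal_inv, htR]
    simp [hC]
  set p : ℝ := C * ((n:ℝ)⁻¹^k * r^(M-k)) with hpdef
  set m : ℝ := ∫ ω, (couponCount X k M ω : ℝ) ∂μ with hmdef
  have hmval : m = n * p := by
    rw [hm1]
    simp_rw [hp]
    rw [Finset.sum_const, Finset.card_univ, Fintype.card_fin, nsmul_eq_mul]
  set t2 : ℝ := (1 - 2*(n : ℝ≥0∞)⁻¹).toReal with ht2def
  have ht2nonneg : 0 ≤ t2 := ENNReal.toReal_nonneg
  set W : ℝ := C^2 * ((n:ℝ)⁻¹^(2*k) * t2^(M-2*k)) with hWdef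
  have hWnonneg : 0 ≤ W := by positivity
  have hWne : ((M.choose k : ℝ≥0∞)) ^ 2 *
      ((n : ℝ≥0∞)⁻¹ ^ (2*k) * (1 - 2*(n : ℝ≥0∞)⁻¹) ^ (M - 2*k)) ≠ ⊤ := by
    apply ENNReal.mul_ne_top (ENNReal.pow_ne_top (ENNReal.natCast_ne_top _))
    apply ENNReal.mul_ne_top (ENNReal.pow_ne_top (ENNReal.inv_ne_top.2 (by
      exact_mod_cast hn.ne')))
    exact ENNReal.pow_ne_top (ne_top_of_le_ne_top ENNReal.one_ne_top tsub_le_self)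
  have hWval : (((M.choose k : ℝ≥0∞)) ^ 2 *
      ((n : ℝ≥0∞)⁻¹ ^ (2*k) * (1 - 2*(n : ℝ≥0∞)⁻¹) ^ (M - 2*k))).toReal = W := by
    rw [ENNReal.toReal_mul, ENNReal.toReal_mul, ENNReal.toReal_pow, ENNReal.toReal_pow,
      ENNReal.toReal_pow, ENNReal.toReal_inv, ← ht2def]
    simp [hWdef, hC]
  -- bound on off-diagonal terms
  have hoff : ∀ c c' : Fin n, c ≠ c' → (μ (A c ∩ A c')).toReal ≤ W := by
    intro c c' hcc
    rw [← hWval]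
    apply ENNReal.toReal_mono hWne
    rw [hA]
    exact aux_AA_bound μ X hX M k c c' hcc
  -- second moment bound
  have hE2 : ∫ ω, ((couponCount X k M ω : ℝ))^2 ∂μ ≤ m + (n:ℝ)^2 * W := by
    rw [hm2]
    have hsplit : ∀ c : Fin n, ∑ c' : Fin n, (μ (A c ∩ A c')).toReal ≤
        (μ (A c)).toReal + n * W := by
      intro c
      rw [← Finset.add_sum_erase _ _ (Finset.mem_univ c), Set.inter_self]
      gcongr with c' hc'
      calc ∑ c' ∈ Finset.univ.erase c, (μ (A c ∩ A c')).toReal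
          ≤ ∑ c' ∈ Finset.univ.erase c, W :=
            Finset.sum_le_sum (fun c' hc' => hoff c c' (Ne.symm (Finset.mem_erase.1 hc').1))
        _ = ((Finset.univ.erase c).card : ℝ) * W := by rw [Finset.sum_const, nsmul_eq_mul]
        _ ≤ n * W := by
            apply mul_le_mul_of_nonneg_right _ hWnonneg
            have : (Finset.univ.erase c).card ≤ n := by
              calc (Finset.univ.erase c).card ≤ Finset.univ.card :=
                Finset.card_le_card (Finset.erase_subset _ _)
              _ = n := by rw [Finset.card_univ, Fintype.card_fin]
            exact_mod_cast this
    calc ∑ c : Fin n, ∑ c' : Fin n, (μ (A c ∩ A c')).toReal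
        ≤ ∑ c : Fin n, ((μ (A c)).toReal + n * W) := Finset.sum_le_sum (fun c _ => hsplit c)
      _ = m + (n:ℝ)^2 * W := by
          rw [Finset.sum_add_distrib, ← hm1, Finset.sum_const, Finset.card_univ,
            Fintype.card_fin, nsmul_eq_mul]
          ring
  -- key algebraic facts
  set q : ℝ := (1 - 1 / (n : ℝ)) ^ (-(2 * (k : ℤ))) with hqdef
  have hq_eq : q = r ^ (-((2*k : ℕ) : ℤ)) := by
    rw [hqdef, hrdef, one_div]
    norm_num
  have hqnonneg : 0 ≤ q := by
    rw [hq_eq]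
    exact zpow_nonneg hrnonneg _
  have ht2r : t2 ≤ r^2 := by
    rcases eq_or_lt_of_le hn1 with h1 | h2
    · -- n = 1
      have hne : n = 1 := by exact_mod_cast h1.symm
      subst hne
      have : (1 - 2*((1:ℕ) : ℝ≥0∞)⁻¹) = 0 := by
        simp [tsub_eq_zero_of_le, one_le_two]
      rw [ht2def, this]
      simp [hrdef]
    · have h2n : (2:ℝ) ≤ n := by
        have : (1:ℕ) < n := by exact_mod_cast h2
        exact_mod_cast this
      have h2n' : (2:ℝ≥0∞) ≤ (n:ℝ≥0∞) := by
        have : (2:ℕ) ≤ n := by exact_mod_cast h2n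
        exact_mod_cast this
      have hle1 : 2*(n : ℝ≥0∞)⁻¹ ≤ 1 := by
        calc 2*(n : ℝ≥0∞)⁻¹ ≤ (n:ℝ≥0∞) * (n:ℝ≥0∞)⁻¹ := mul_le_mul_left h2n' _
          _ = 1 := ENNReal.mul_inv_cancel (by exact_mod_cast hn.ne') (ENNReal.natCast_ne_top n)
      rw [ht2def, ENNReal.toReal_sub_of_le hle1 ENNReal.one_ne_top]
      simp only [ENNReal.toReal_mul, ENNReal.toReal_inv, ENNReal.toReal_one,
        ENNReal.toReal_ofNat, ENNReal.toReal_natCast, hrdef]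
      nlinarith [sq_nonneg ((n:ℝ)⁻¹)]
  have hkey : q * (r^(M-k))^2 = (r^(M-2*k))^2 := by
    rcases Nat.eq_zero_or_pos k with hk0 | hkpos
    · subst hk0
      simp [hq_eq]
    · have hn2 : 2 ≤ n := by omega
      have hrpos : 0 < r := by
        rw [hrdef]
        have : (n:ℝ)⁻¹ < 1 := by
          rw [inv_lt_one_iff₀]; right; exact_mod_cast by omega
        linarith
      rw [hq_eq, zpow_neg, zpow_natCast, ← pow_mul, ← pow_mul]
      have hexp : (M - k) * 2 = 2*k + (M - 2*k) * 2 := by omega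
      rw [hexp, pow_add, ← mul_assoc, inv_mul_cancel₀ (pow_ne_zero _ hrpos.ne'), one_mul]
  have hWqp : W ≤ q * p^2 := by
    have h1 : t2^(M-2*k) ≤ (r^(M-2*k))^2 := by
      calc t2^(M-2*k) ≤ (r^2)^(M-2*k) := pow_le_pow_left₀ ht2nonneg ht2r _
        _ = (r^(M-2*k))^2 := by rw [← pow_mul, ← pow_mul, Nat.mul_comm]
    have hpow : ((n:ℝ)⁻¹^k)^2 = (n:ℝ)⁻¹^(2*k) := by rw [← pow_mul, Nat.mul_comm]
    have h2 : q * p^2 = C^2 * ((n:ℝ)⁻¹^(2*k) * (r^(M-2*k))^2) := by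
      calc q * p^2 = ((n:ℝ)⁻¹^k)^2 * C^2 * (q * (r^(M-k))^2) := by rw [hpdef]; ring
        _ = C^2 * ((n:ℝ)⁻¹^(2*k) * (r^(M-2*k))^2) := by rw [hkey, hpow]; ring
    rw [hWdef, h2]
    apply mul_le_mul_of_nonneg_left _ (by positivity)
    apply mul_le_mul_of_nonneg_left h1 (by positivity)
  have hn2W : (n:ℝ)^2 * W ≤ q * m^2 := by
    rw [hmval]
    calc (n:ℝ)^2 * W ≤ (n:ℝ)^2 * (q * p^2) := by
          apply mul_le_mul_of_nonneg_left hWqp (by positivity)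
      _ = q * ((n:ℝ) * p)^2 := by ring
  -- conclude
  rw [variance_eq_sub hmem]
  have hfinal : ∫ x, ((fun ω => (couponCount X k M ω : ℝ)) ^ 2) x ∂μ =
      ∫ ω, ((couponCount X k M ω : ℝ))^2 ∂μ := by
    simp_rw [Pi.pow_apply]
  rw [hfinal]
  nlinarith [hE2, hn2W]
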